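/- The successor function on φ-rows preserves the equivalence ∼: if row ∼ row′ and A is any atom, then succ(row, A) ∼ succ(row′, A). -/
import Mathlib

structure Atom (α β : Type) where
  req : Finset α
  prop : Finset β
deriving DecidableEq

def gen {α β : Type} [DecidableEq α] [DecidableEq β]
    (Obs : Atom α β → Finset α) (A B : Atom α β) : Atom α β :=
  ⟨A.req ∪ B.req ∪ Obs A ∪ Obs B, A.prop ∩ B.prop⟩

def succ {α β : Type} [DecidableEq α] [DecidableEq β]
    (Obs : Atom α β → Finset α) : List (Atom α β) → Atom α β → List (Atom α β)
  | [], A => [A]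
  | r :: rs, A => A :: succ Obs rs (gen Obs r A)

def rank {α β : Type} (REQ : Finset α) (A : Atom α β) : ℕ :=
  REQ.card - A.req.card

def rle {α β : Type} [DecidableEq α] [DecidableEq β] :
    List (Atom α β) → List (Atom α β × ℕ)
  | [] => []
  | a :: l =>
    match rle l with
    | [] => [(a, 1)]
    | (b, m) :: t => if a = b then (b, m + 1) :: t else (a, 1) :: (b, m) :: t

def BlockEquiv {α β : Type} (REQ : Finset α) (b b' : Atom α β × ℕ) : Prop :=
  b.1 = b'.1 ∧ (b.2 = b'.2 ∨ (rank REQ b.1 < b.2 ∧ rank REQ b.1 < b'.2))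

def REquiv {α β : Type} [DecidableEq α] [DecidableEq β]
    (REQ : Finset α) (w w' : List (Atom α β)) : Prop :=
  List.Forall₂ (BlockEquiv REQ) (rle w) (rle w')

variable {α β : Type} [DecidableEq α] [DecidableEq β]

lemma rle_eq_nil {l : List (Atom α β)} (h : rle l = []) : l = [] := by
  cases l with
  | nil => rfl
  | cons a t =>
    simp only [rle] at h
    rcases ht : rle t with _ | ⟨⟨b, m⟩, s⟩ <;> rw [ht] at h
    · simp at h
    · by_cases hab : a = b <;> simp [hab] at h

lemma rle_cons_struct (x : Atom α β) (v : List (Atom α β)) :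
    ∃ k t, rle (x :: v) = (x, k) :: t ∧ 1 ≤ k := by
  simp only [rle]
  rcases hv : rle v with _ | ⟨⟨b, m⟩, s⟩
  · exact ⟨1, [], rfl, le_refl 1⟩
  · by_cases hxb : x = b
    · subst hxb; exact ⟨m + 1, s, by simp, by omega⟩
    · exact ⟨1, (b, m) :: s, by simp [hxb], le_refl 1⟩

lemma rle_decomp : ∀ (l : List (Atom α β)) (X : Atom α β) (m : ℕ) (t : List (Atom α β × ℕ)),
    rle l = (X, m) :: t → 1 ≤ m ∧ ∃ l₂, l = List.replicate m X ++ l₂ ∧ rle l₂ = t := by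
  intro l
  induction l with
  | nil => intro X m t h; simp [rle] at h
  | cons x v ih =>
    intro X m t h
    simp only [rle] at h
    rcases hv : rle v with _ | ⟨⟨b, k⟩, s⟩ <;> rw [hv] at h
    · simp at h
      obtain ⟨⟨hX, hm⟩, ht⟩ := h
      subst hX; subst hm; subst ht
      refine ⟨le_refl 1, [], ?_, rfl⟩
      simp [rle_eq_nil hv]
    · by_cases hxb : x = b
      · simp [hxb] at h
        obtain ⟨⟨hX, hm⟩, ht⟩ := h
        obtain ⟨hk, l₂, hl₂, hrle⟩ := ih b k s hv
        subst hX hxb ht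
        refine ⟨by omega, l₂, ?_, hrle⟩
        rw [← hm]
        simp [hl₂, List.replicate_succ]
      · simp [hxb] at h
        obtain ⟨⟨hX, hm⟩, ht⟩ := h
        subst hX; subst hm
        exact ⟨le_refl 1, v, by simp [List.replicate_succ], hv.trans ht⟩

lemma rle_replicate_append {C : Atom α β} {w : List (Atom α β)} {e : ℕ} {t : List (Atom α β × ℕ)}
    (h : rle w = (C, e) :: t) (d : ℕ) : rle (List.replicate d C ++ w) = (C, d + e) :: t := by
  induction d with
  | zero => simpa using h
  | succ n ih =>
    rw [List.replicate_succ, List.cons_append]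
    simp only [rle, ih]
    simp [Nat.add_right_comm]
lemma requiv_cons {REQ : Finset α} {w w' : List (Atom α β)} (x : Atom α β)
    (h : REquiv REQ w w') : REquiv REQ (x :: w) (x :: w') := by
  unfold REquiv at *
  rcases hw : rle w with _ | ⟨⟨b, m⟩, t⟩ <;> rw [hw] at h
  · have hw' := List.forall₂_nil_left_iff.mp h
    simp only [rle, hw, hw']
    exact List.Forall₂.cons ⟨rfl, Or.inl rfl⟩ List.Forall₂.nil
  · obtain ⟨⟨b', m'⟩, t', hbe, ht, hw'⟩ := List.forall₂_cons_left_iff.mp h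
    obtain ⟨hb1, hb2⟩ := hbe
    simp only at hb1 hb2
    subst hb1
    simp only [rle, hw, hw']
    by_cases hxb : x = b
    · subst hxb
      simp only [if_pos rfl]
      refine List.Forall₂.cons ⟨rfl, ?_⟩ ht
      show m + 1 = m' + 1 ∨ rank REQ x < m + 1 ∧ rank REQ x < m' + 1
      rcases hb2 with h1 | h2
      · exact Or.inl (by omega)
      · exact Or.inr ⟨by omega, by omega⟩
    · simp only [if_neg hxb]
      exact List.Forall₂.cons ⟨rfl, Or.inl rfl⟩ (List.Forall₂.cons ⟨rfl, hb2⟩ ht)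

lemma requiv_append_left {REQ : Finset α} (P : List (Atom α β)) {w w' : List (Atom α β)}
    (h : REquiv REQ w w') : REquiv REQ (P ++ w) (P ++ w') := by
  induction P with
  | nil => simpa using h
  | cons x P ih => simpa using requiv_cons x ih

lemma succ_cons_eq (Obs : Atom α β → Finset α) (l : List (Atom α β)) (A : Atom α β) :
    ∃ v, succ Obs l A = A :: v := by
  cases l <;> simp [succ]

lemma succ_replicate_append (Obs : Atom α β → Finset α) (X : Atom α β)
    (rest : List (Atom α β)) :
    ∀ (n : ℕ) (A : Atom α β),
      succ Obs (List.replicate n X ++ rest) A =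
        (List.range n).map (fun k => (gen Obs X)^[k] A) ++
          succ Obs rest ((gen Obs X)^[n] A) := by
  intro n
  induction n with
  | zero => intro A; simp
  | succ n ih =>
    intro A
    rw [List.replicate_succ, List.cons_append]
    show A :: succ Obs (List.replicate n X ++ rest) (gen Obs X A) = _
    rw [ih (gen Obs X A), List.range_succ_eq_map, List.map_cons, List.map_map,
      List.cons_append, Function.iterate_zero_apply, ← Function.iterate_succ_apply]
    congr 2
omit [DecidableEq α] [DecidableEq β] in
lemma Atom.ext' {A B : Atom α β} (h1 : A.req = B.req) (h2 : A.prop = B.prop) : A = B := by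
  cases A; cases B; simp_all

def GInv (REQ : Finset α) (Obs : Atom α β → Finset α) (X B : Atom α β) : Prop :=
  X.req ⊆ B.req ∧ Obs X ⊆ B.req ∧ B.prop ⊆ X.prop ∧ B.req ⊆ REQ

lemma ginv_gen {REQ : Finset α} {Obs : Atom α β → Finset α} {X : Atom α β}
    (hObs : ∀ Y, Obs Y ⊆ REQ) (hX : X.req ⊆ REQ) (B : Atom α β) (hB : B.req ⊆ REQ) :
    GInv REQ Obs X (gen Obs X B) := by
  refine ⟨?_, ?_, ?_, ?_⟩
  · simp only [gen]
    intro a ha; simp [ha]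
  · simp only [gen]
    intro a ha; simp [ha]
  · simp only [gen]
    exact Finset.inter_subset_left
  · simp only [gen]
    intro a ha
    simp only [Finset.mem_union] at ha
    rcases ha with ((h | h) | h) | h
    · exact hX h
    · exact hB h
    · exact hObs X h
    · exact hObs B h

lemma gen_prop {REQ : Finset α} {Obs : Atom α β → Finset α} {X B : Atom α β}
    (hB : GInv REQ Obs X B) : (gen Obs X B).prop = B.prop := by
  simp only [gen]
  exact Finset.inter_eq_right.mpr hB.2.2.1

lemma gen_req_sub {Obs : Atom α β → Finset α} (X B : Atom α β) :
    B.req ⊆ (gen Obs X B).req := by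
  simp only [gen]
  intro a ha; simp [ha]

lemma gen_card_lt {REQ : Finset α} {Obs : Atom α β → Finset α} {X B : Atom α β}
    (hB : GInv REQ Obs X B) (h : gen Obs X B ≠ B) : B.req.card < (gen Obs X B).req.card := by
  apply Finset.card_lt_card
  refine ⟨gen_req_sub X B, fun hle => h ?_⟩
  exact Atom.ext' (le_antisymm hle (gen_req_sub X B)) (gen_prop hB)

lemma ginv_iter {REQ : Finset α} {Obs : Atom α β → Finset α} {X A : Atom α β}
    (hObs : ∀ Y, Obs Y ⊆ REQ) (hX : X.req ⊆ REQ) (hA : A.req ⊆ REQ) :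
    ∀ k, 1 ≤ k → GInv REQ Obs X ((gen Obs X)^[k] A) := by
  intro k hk
  induction k, hk using Nat.le_induction with
  | base => rw [Function.iterate_one]; exact ginv_gen hObs hX A hA
  | succ k hk ih =>
    rw [Function.iterate_succ_apply']
    exact ginv_gen hObs hX _ ih.2.2.2

lemma iter_req_sub {REQ : Finset α} {Obs : Atom α β → Finset α} {X A : Atom α β}
    (hObs : ∀ Y, Obs Y ⊆ REQ) (hX : X.req ⊆ REQ) (hA : A.req ⊆ REQ) (k : ℕ) :
    ((gen Obs X)^[k] A).req ⊆ REQ := by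
  cases k with
  | zero => simpa using hA
  | succ k => exact (ginv_iter hObs hX hA (k + 1) (by omega)).2.2.2

lemma iter_growth {REQ : Finset α} {Obs : Atom α β → Finset α} {X A : Atom α β}
    (hObs : ∀ Y, Obs Y ⊆ REQ) (hX : X.req ⊆ REQ) (hA : A.req ⊆ REQ) :
    ∀ j, (∀ k, 1 ≤ k → k ≤ j → (gen Obs X)^[k+1] A ≠ (gen Obs X)^[k] A) →
      X.req.card + j ≤ ((gen Obs X)^[j+1] A).req.card := by
  intro j
  induction j with
  | zero =>
    intro _
    simpa using Finset.card_le_card (ginv_iter hObs hX hA 1 (le_refl 1)).1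
  | succ j ih =>
    intro h
    have h1 := ih (fun k hk1 hk2 => h k hk1 (by omega))
    have h2 : (gen Obs X)^[j+1+1] A ≠ (gen Obs X)^[j+1] A := h (j+1) (by omega) (le_refl _)
    rw [Function.iterate_succ_apply'] at h2 ⊢
    have h3 := gen_card_lt (ginv_iter hObs hX hA (j+1) (by omega)) h2
    omega

lemma iter_exists_fix {REQ : Finset α} {Obs : Atom α β → Finset α} {X A : Atom α β}
    (hObs : ∀ Y, Obs Y ⊆ REQ) (hX : X.req ⊆ REQ) (hA : A.req ⊆ REQ) :
    ∃ k, (1 ≤ k ∧ (gen Obs X)^[k+1] A = (gen Obs X)^[k] A) ∧ k ≤ rank REQ X + 1 := by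
  by_contra hcon
  push_neg at hcon
  have h1 : ∀ k, 1 ≤ k → k ≤ rank REQ X + 1 → (gen Obs X)^[k+1] A ≠ (gen Obs X)^[k] A := by
    intro k hk1 hk2 heq
    exact absurd (hcon k ⟨hk1, heq⟩) (by omega)
  have h2 := iter_growth hObs hX hA (rank REQ X + 1) h1
  have h3 := Finset.card_le_card (iter_req_sub hObs hX hA (rank REQ X + 1 + 1))
  have h4 := Finset.card_le_card hX
  simp only [rank] at h2 h3
  omega

lemma iter_persist {Obs : Atom α β → Finset α} {X A : Atom α β} {u : ℕ}
    (hfix : (gen Obs X)^[u+1] A = (gen Obs X)^[u] A) :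
    ∀ j, u ≤ j → (gen Obs X)^[j] A = (gen Obs X)^[u] A := by
  intro j hj
  induction j, hj using Nat.le_induction with
  | base => rfl
  | succ j hj ih =>
    rw [Function.iterate_succ_apply', ih]
    exact ((Function.iterate_succ_apply' (gen Obs X) u A).symm.trans hfix)

lemma map_range_stab {γ : Type*} (f : ℕ → γ) (u : ℕ) :
    ∀ m, u ≤ m → (∀ j, u ≤ j → f j = f u) →
      (List.range m).map f = (List.range u).map f ++ List.replicate (m - u) (f u) := by
  intro m hm
  induction m, hm using Nat.le_induction with
  | base => intro _; simp
  | succ m hm ih =>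
    intro hconst
    rw [List.range_succ, List.map_append, ih hconst]
    have h1 : m + 1 - u = (m - u) + 1 := by omega
    rw [h1, List.replicate_succ']
    simp [hconst m hm]

lemma requiv_refl (REQ : Finset α) (w : List (Atom α β)) : REquiv REQ w w := by
  unfold REquiv
  rw [List.forall₂_same]
  exact fun a _ => ⟨rfl, Or.inl rfl⟩
lemma succ_aux (REQ : Finset α) (Obs : Atom α β → Finset α) (hObs : ∀ Y, Obs Y ⊆ REQ) :
    ∀ (n : ℕ) (r r' : List (Atom α β)) (A : Atom α β), r.length ≤ n →
      A.req ⊆ REQ → (∀ Y ∈ r, Y.req ⊆ REQ) → (∀ Y ∈ r', Y.req ⊆ REQ) →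
      REquiv REQ r r' → REquiv REQ (succ Obs r A) (succ Obs r' A) := by
  intro n
  induction n with
  | zero =>
    intro r r' A hlen _ _ _ h
    have hr : r = [] := List.length_eq_zero_iff.mp (Nat.le_zero.mp hlen)
    subst hr
    have hr' : r' = [] := by
      apply rle_eq_nil
      exact List.forall₂_nil_left_iff.mp h
    subst hr'
    exact requiv_refl REQ _
  | succ n ih =>
    intro r r' A hlen hA hrs hrs' h
    unfold REquiv at h
    rcases hw : rle r with _ | ⟨⟨X, m⟩, t⟩ <;> rw [hw] at h
    · have hr : r = [] := rle_eq_nil hw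
      have hr' : r' = [] := rle_eq_nil (List.forall₂_nil_left_iff.mp h)
      subst hr; subst hr'
      exact requiv_refl REQ _
    · obtain ⟨⟨X', m'⟩, t', hbe, ht, hw'⟩ := List.forall₂_cons_left_iff.mp h
      obtain ⟨hb1, hb2⟩ := hbe
      simp only at hb1 hb2
      subst hb1
      obtain ⟨hm1, r₂, hr₂, hrle₂⟩ := rle_decomp r X m t hw
      obtain ⟨hm1', r₂', hr₂', hrle₂'⟩ := rle_decomp r' X m' t' hw'
      have hX : X.req ⊆ REQ := by
        apply hrs X
        rw [hr₂]
        exact List.mem_append_left _ (List.mem_replicate.mpr ⟨by omega, rfl⟩)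
      have hlen₂ : r₂.length ≤ n := by
        rw [hr₂] at hlen
        simp only [List.length_append, List.length_replicate] at hlen
        omega
      have hrs₂ : ∀ Y ∈ r₂, Y.req ⊆ REQ := fun Y hY =>
        hrs Y (by rw [hr₂]; exact List.mem_append_right _ hY)
      have hrs₂' : ∀ Y ∈ r₂', Y.req ⊆ REQ := fun Y hY =>
        hrs' Y (by rw [hr₂']; exact List.mem_append_right _ hY)
      have hreq : ∀ k, ((gen Obs X)^[k] A).req ⊆ REQ := iter_req_sub hObs hX hA
      have hequiv₂ : REquiv REQ r₂ r₂' := by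
        unfold REquiv; rw [hrle₂, hrle₂']; exact ht
      rw [hr₂, hr₂', succ_replicate_append, succ_replicate_append]
      rcases hb2 with hmm | hmm
      · -- equal multiplicities
        subst hmm
        apply requiv_append_left
        exact ih r₂ r₂' _ hlen₂ (hreq m) hrs₂ hrs₂' hequiv₂
      · -- both multiplicities exceed the rank
        have hex := iter_exists_fix (A := A) hObs hX hA
        have hex' : ∃ k, 1 ≤ k ∧ (gen Obs X)^[k+1] A = (gen Obs X)^[k] A :=
          ⟨hex.choose, hex.choose_spec.1⟩
        set u := Nat.find hex' with hu_def
        obtain ⟨hu1, hufix⟩ := Nat.find_spec hex'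
        have hub : u ≤ rank REQ X + 1 := Nat.find_min' hex' hex.choose_spec.1 |>.trans hex.choose_spec.2
        have hconst : ∀ j, u ≤ j → (gen Obs X)^[j] A = (gen Obs X)^[u] A := iter_persist hufix
        have hmin : ∀ k, 1 ≤ k → k ≤ u - 1 → (gen Obs X)^[k+1] A ≠ (gen Obs X)^[k] A := by
          intro k hk1 hk2 heq
          exact Nat.find_min hex' (m := k) (by omega) ⟨hk1, heq⟩
        have hcard : X.req.card + (u - 1) ≤ ((gen Obs X)^[u] A).req.card := by
          have := iter_growth hObs hX hA (u - 1) hmin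
          have hu : u - 1 + 1 = u := by omega
          rwa [hu] at this
        have hum : u ≤ m := by omega
        have hum' : u ≤ m' := by omega
        rw [map_range_stab _ u m hum hconst, map_range_stab _ u m' hum' hconst,
          hconst m hum, hconst m' hum', List.append_assoc, List.append_assoc]
        apply requiv_append_left
        have h2 : REquiv REQ (succ Obs r₂ ((gen Obs X)^[u] A))
            (succ Obs r₂' ((gen Obs X)^[u] A)) :=
          ih r₂ r₂' _ hlen₂ (hreq u) hrs₂ hrs₂' hequiv₂
        obtain ⟨v, hv⟩ := succ_cons_eq Obs r₂ ((gen Obs X)^[u] A)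
        obtain ⟨e, s, hes, he1⟩ := rle_cons_struct ((gen Obs X)^[u] A) v
        obtain ⟨v', hv'⟩ := succ_cons_eq Obs r₂' ((gen Obs X)^[u] A)
        obtain ⟨e', s', hes', he1'⟩ := rle_cons_struct ((gen Obs X)^[u] A) v'
        have hrw : rle (succ Obs r₂ ((gen Obs X)^[u] A)) = ((gen Obs X)^[u] A, e) :: s := by
          rw [hv]; exact hes
        have hrw' : rle (succ Obs r₂' ((gen Obs X)^[u] A)) = ((gen Obs X)^[u] A, e') :: s' := by
          rw [hv']; exact hes'
        unfold REquiv at h2 ⊢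
        rw [hrw, hrw'] at h2
        obtain ⟨-, hss⟩ := List.forall₂_cons.mp h2
        rw [rle_replicate_append hrw (m - u), rle_replicate_append hrw' (m' - u)]
        refine List.Forall₂.cons ⟨rfl, Or.inr ⟨?_, ?_⟩⟩ hss
        · have hc1 := Finset.card_le_card (hreq u)
          have hc2 := Finset.card_le_card hX
          simp only [rank] at hmm ⊢
          omega
        · have hc1 := Finset.card_le_card (hreq u)
          have hc2 := Finset.card_le_card hX
          simp only [rank] at hmm ⊢
          omega
/-- The successor function preserves the equivalence ∼ of φ-rows. -/
theorem succ_preserves_equiv {α β : Type} [DecidableEq α] [DecidableEq β]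
    (REQ : Finset α) (Obs : Atom α β → Finset α) (hObs : ∀ X, Obs X ⊆ REQ)
    (r r' : List (Atom α β)) (A : Atom α β) (hA : A.req ⊆ REQ)
    (hrsub : ∀ X ∈ r, X.req ⊆ REQ) (hr'sub : ∀ X ∈ r', X.req ⊆ REQ)
    (hrow : List.Chain' (fun X Y => X.req ⊆ Y.req ∧ Obs X ⊆ Y.req ∧ Y.prop ⊆ X.prop) r)
    (hrow' : List.Chain' (fun X Y => X.req ⊆ Y.req ∧ Obs X ⊆ Y.req ∧ Y.prop ⊆ X.prop) r')
    (h : REquiv REQ r r') :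
    REquiv REQ (succ Obs r A) (succ Obs r' A) :=
  succ_aux REQ Obs hObs r.length r r' A (le_refl _) hA hrsub hr'sub h
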